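/- Let n ≥ 2 and fix i ≠ j with 1 ≤ i, j ≤ n. Let w be the permutation of {1,…,n} with w(i) = 1, w(j) = n, and whose values at the remaining positions, read in increasing order of position, are n−1, n−2, …, 2 in decreasing order. Let w₀ be the permutation with w₀(k) = n−k+1 for all k, and write s_k for the transposition exchanging k and k+1. Then, with products of permutations applied right to left (so that w·s means apply s first): w = w₀·s_1·s_2·⋯·s_{j−1}·s_{n−1}·s_{n−2}·⋯·s_i if j < i, and w = w₀·s_1·s_2·⋯·s_{j−2}·s_{n−1}·s_{n−2}·⋯·s_i if j > i (where an empty product of transpositions is the identity). -/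

import Mathlib

open Matrix

noncomputable section

/-- The length of a permutation: its number of inversions. -/
def invLen {n : ℕ} (w : Equiv.Perm (Fin n)) : ℕ :=
  (Finset.univ.filter (fun p : Fin n × Fin n => p.1 < p.2 ∧ w p.2 < w p.1)).card

def IsTransposition {n : ℕ} (t : Equiv.Perm (Fin n)) : Prop :=
  ∃ a b : Fin n, a ≠ b ∧ t = Equiv.swap a b

/-- `BruhatCovers w v` means `w` covers `v` in the Bruhat order:
`v = w·t` for some transposition `t` and `ℓ(v) = ℓ(w) − 1`. -/
def BruhatCovers {n : ℕ} (w v : Equiv.Perm (Fin n)) : Prop :=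
  (∃ t, IsTransposition t ∧ v = w * t) ∧ invLen v + 1 = invLen w

/-- The Bruhat order: reflexive–transitive closure of the covering relation. -/
def BruhatLE {n : ℕ} (v w : Equiv.Perm (Fin n)) : Prop :=
  Relation.ReflTransGen (fun x y => BruhatCovers y x) v w

def BruhatLT {n : ℕ} (v w : Equiv.Perm (Fin n)) : Prop :=
  BruhatLE v w ∧ v ≠ w

/-- The matrix unit `E_{kl}`. -/
def stdE (n : ℕ) (k l : Fin n) : Matrix (Fin n) (Fin n) ℂ := Matrix.single k l 1

/-- The permutation matrix of `σ`: entry `(k,l)` is `1` iff `k = σ(l)`. -/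
def permMat {n : ℕ} (σ : Equiv.Perm (Fin n)) : Matrix (Fin n) (Fin n) ℂ :=
  Matrix.of fun k l => if k = σ l then 1 else 0

/-- The Hessenberg space of a (1-based) Hessenberg function `h`:
matrices `M` with `M_{kl} = 0` whenever `k > h(l)`.  Row index `k : Fin n`
corresponds to the 1-based row `(k : ℕ) + 1`. -/
def HessSpace {n : ℕ} (h : Fin n → ℕ) : Set (Matrix (Fin n) (Fin n) ℂ) :=
  {M | ∀ k l : Fin n, h l < (k : ℕ) + 1 → M k l = 0}

/-- The span `H_{ij}` of the matrix units `E_{kl}` with `k ≤ i` and `l ≥ j`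
(`i`, `j`, `k`, `l` all 1-based): matrices vanishing outside the
upper-right `i × (n−j+1)` rectangle. -/
def Hrect (n i j : ℕ) : Set (Matrix (Fin n) (Fin n) ℂ) :=
  {M | ∀ k l : Fin n, ¬((k : ℕ) + 1 ≤ i ∧ j ≤ (l : ℕ) + 1) → M k l = 0}

/-- The adjacent transposition `s_k` (1-based: exchanging `k` and `k+1`),
as a permutation of `Fin n` (0-based: exchanging `k−1` and `k`). -/
def adjT (n : ℕ) (k : ℕ) : Equiv.Perm (Fin n) :=
  if h : 1 ≤ k ∧ k < n then Equiv.swap ⟨k - 1, by omega⟩ ⟨k, h.2⟩ else 1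

/-- The product `s_1·s_2·⋯·s_m`. -/
def ascProd (n m : ℕ) : Equiv.Perm (Fin n) :=
  ((List.range m).map fun t => adjT n (t + 1)).prod

/-- The product `s_{n−1}·s_{n−2}·⋯·s_i`. -/
def descProd (n i : ℕ) : Equiv.Perm (Fin n) :=
  ((List.range (n - i)).map fun t => adjT n (n - 1 - t)).prod

lemma adjT_coe (n k : ℕ) (h1 : 1 ≤ k) (h2 : k < n) (x : Fin n) :
    ((adjT n k x : Fin n) : ℕ) =
      if (x : ℕ) = k - 1 then k else if (x : ℕ) = k then k - 1 else (x : ℕ) := by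
  rw [adjT, dif_pos ⟨h1, h2⟩, Equiv.swap_apply_def]
  have hx := x.isLt
  split_ifs <;> simp only [Fin.ext_iff, Fin.val_mk] at * <;> omega

lemma ascProd_coe (n : ℕ) : ∀ (m : ℕ), m < n → ∀ x : Fin n,
    ((ascProd n m x : Fin n) : ℕ) =
      (if (x : ℕ) < m then (x : ℕ) + 1 else if (x : ℕ) = m then (0 : ℕ) else (x : ℕ)) := by
  intro m
  induction m with
  | zero =>
    intro _ x
    simp [ascProd]
  | succ m ih =>
    intro hm x
    have step : ascProd n (m + 1) = ascProd n m * adjT n (m + 1) := by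
      rw [ascProd, List.range_succ, List.map_append, List.prod_append]
      simp [ascProd]
    rw [step, Equiv.Perm.mul_apply]
    have hadj := adjT_coe n (m + 1) (by omega) hm x
    simp only [Nat.add_sub_cancel] at hadj
    have ihh := ih (by omega) ((adjT n (m + 1)) x)
    rw [ihh, hadj]
    have hx := x.isLt
    split_ifs <;> omega

lemma descProd_step (n i : ℕ) (h1 : 1 ≤ i) (h2 : i < n) :
    descProd n i = descProd n (i + 1) * adjT n i := by
  rw [descProd, show n - i = (n - (i+1)) + 1 by omega, List.range_succ, List.map_append,
    List.prod_append, descProd]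
  congr 1
  simp only [List.map_cons, List.map_nil, List.prod_cons, List.prod_nil, mul_one]
  congr 1
  omega

lemma descProd_coe (n : ℕ) : ∀ (k : ℕ), k ≤ n - 1 → ∀ x : Fin n,
    ((descProd n (n - k) x : Fin n) : ℕ) =
      if (x : ℕ) = (n - k) - 1 then n - 1 else if n - k ≤ (x : ℕ) then (x : ℕ) - 1 else (x : ℕ) := by
  intro k
  induction k with
  | zero =>
    intro hk x
    have hn : 0 < n := x.pos
    simp only [Nat.sub_zero, descProd, Nat.sub_self, List.range_zero, List.map_nil,
      List.prod_nil, Equiv.Perm.coe_one, id_eq]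
    have hx := x.isLt
    split_ifs <;> omega
  | succ k ih =>
    intro hk x
    have hn : 0 < n := x.pos
    set i := n - (k + 1) with hi
    have hi1 : 1 ≤ i := by omega
    have hi2 : i < n := by omega
    have hnext : n - k = i + 1 := by omega
    rw [descProd_step n i hi1 hi2, Equiv.Perm.mul_apply]
    have ihh := ih (by omega) ((adjT n i) x)
    rw [hnext] at ihh
    rw [ihh]
    have hadj := adjT_coe n i hi1 hi2 x
    rw [hadj]
    have hx := x.isLt
    have hy := ((adjT n i) x).isLt
    split_ifs <;> omega

lemma descProd_coe' (n i : ℕ) (h1 : 1 ≤ i) (h2 : i ≤ n) (x : Fin n) :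
    ((descProd n i x : Fin n) : ℕ) =
      if (x : ℕ) = i - 1 then n - 1 else if i ≤ (x : ℕ) then (x : ℕ) - 1 else (x : ℕ) := by
  have := descProd_coe n (n - i) (by omega) x
  rwa [show n - (n - i) = i by omega] at this

lemma keyCount {n : ℕ} (hn : 2 ≤ n) (w : Equiv.Perm (Fin n)) (I J : Fin n)
    (hwI : ((w I : Fin n) : ℕ) = 0) (hwJ : ((w J : Fin n) : ℕ) = n - 1)
    (hdec : ∀ p q : Fin n, p ≠ I → p ≠ J → q ≠ I → q ≠ J → p < q → w q < w p)
    (p : Fin n) (hpI : p ≠ I) (hpJ : p ≠ J) :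
    ((w p : Fin n) : ℕ) =
      (Finset.univ.filter (fun q : Fin n => p < q ∧ q ≠ I ∧ q ≠ J)).card + 1 := by
  have hIJ : I ≠ J := by
    intro h; rw [h, hwJ] at hwI; omega
  set A := Finset.univ.filter (fun q : Fin n => p < q ∧ q ≠ I ∧ q ≠ J) with hA
  set A' := Finset.univ.filter (fun q : Fin n => q < p ∧ q ≠ I ∧ q ≠ J) with hA'
  have hwp1 : 1 ≤ ((w p : Fin n) : ℕ) := by
    rcases Nat.eq_zero_or_pos ((w p : Fin n) : ℕ) with h | h
    · exfalso; apply hpI; apply w.injective; exact Fin.ext (by omega)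
    · exact h
  have hwpn : ((w p : Fin n) : ℕ) < n - 1 := by
    have h2 := (w p).isLt
    rcases Nat.lt_or_ge ((w p : Fin n) : ℕ) (n-1) with h | h
    · exact h
    · exfalso; apply hpJ; apply w.injective; exact Fin.ext (by omega)
  -- upper bound via A'
  have h1 : A.card ≤ (Finset.Ioo (⟨0, by omega⟩ : Fin n) (w p)).card := by
    apply Finset.card_le_card_of_injOn w
    · intro q hq
      simp only [hA, Finset.mem_coe, Finset.mem_filter, Finset.mem_univ, true_and] at hq
      obtain ⟨hpq, hqI, hqJ⟩ := hq
      rw [Finset.mem_coe, Finset.mem_Ioo]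
      constructor
      · rw [Fin.lt_def]
        simp only [Fin.val_mk]
        have : ((w q : Fin n) : ℕ) ≠ 0 := by
          intro h; apply hqI; apply w.injective; exact Fin.ext (by omega)
        omega
      · exact hdec p q hpI hpJ hqI hqJ hpq
    · exact fun a _ b _ h => w.injective h
  have h2 : A'.card ≤ (Finset.Ioo (w p) (⟨n - 1, by omega⟩ : Fin n)).card := by
    apply Finset.card_le_card_of_injOn w
    · intro q hq
      simp only [hA', Finset.mem_coe, Finset.mem_filter, Finset.mem_univ, true_and] at hq
      obtain ⟨hqp, hqI, hqJ⟩ := hq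
      rw [Finset.mem_coe, Finset.mem_Ioo]
      constructor
      · exact hdec q p hqI hqJ hpI hpJ hqp
      · rw [Fin.lt_def]
        simp only [Fin.val_mk]
        have h3 := (w q).isLt
        have : ((w q : Fin n) : ℕ) ≠ n - 1 := by
          intro h; apply hqJ; apply w.injective; exact Fin.ext (by omega)
        omega
    · exact fun a _ b _ h => w.injective h
  rw [Fin.card_Ioo] at h1 h2
  simp only [Fin.val_mk] at h1 h2
  -- total count
  have h3 : A.card + A'.card = n - 3 := by
    have hdisj : Disjoint A A' := by
      rw [Finset.disjoint_filter]
      rintro q _ ⟨h1, _⟩ ⟨h2, _⟩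
      exact absurd h2 (not_lt.mpr h1.le)
    have hunion : A ∪ A' = Finset.univ \ {p, I, J} := by
      ext q
      simp only [hA, hA', Finset.mem_union, Finset.mem_filter, Finset.mem_univ, true_and,
        Finset.mem_sdiff, Finset.mem_insert, Finset.mem_singleton]
      constructor
      · rintro (⟨h1, h2, h3⟩ | ⟨h1, h2, h3⟩) <;>
          exact fun hc => by
            rcases hc with hc | hc | hc
            · subst hc; exact lt_irrefl _ h1
            · exact h2 hc
            · exact h3 hc
      · intro hq
        have hq1 : q ≠ p := fun h => hq (Or.inl h)
        have hq2 : q ≠ I := fun h => hq (Or.inr (Or.inl h))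
        have hq3 : q ≠ J := fun h => hq (Or.inr (Or.inr h))
        rcases lt_or_gt_of_ne hq1 with h | h
        · exact Or.inr ⟨h, hq2, hq3⟩
        · exact Or.inl ⟨h, hq2, hq3⟩
    have hcard3 : ({p, I, J} : Finset (Fin n)).card = 3 := by
      rw [Finset.card_insert_of_notMem (by simp [hpI, hpJ]),
        Finset.card_insert_of_notMem (by simp [hIJ]), Finset.card_singleton]
    have := Finset.card_union_of_disjoint hdisj
    rw [hunion, Finset.card_sdiff_of_subset (Finset.subset_univ _), Finset.card_univ,
      Fintype.card_fin, hcard3] at this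
    omega
  omega


set_option maxHeartbeats 1000000 in
lemma case_aux (n : ℕ) (hn : 2 ≤ n) (i j a : ℕ) (hi1 : 1 ≤ i) (hin : i ≤ n)
    (hj1 : 1 ≤ j) (hjn : j ≤ n) (hij : i ≠ j) (han : a ≤ n - 2)
    (hDJ : (if j - 1 = i - 1 then n - 1 else if i ≤ j - 1 then j - 2 else j - 1) = a)
    (w : Equiv.Perm (Fin n)) (I J : Fin n)
    (hIv : (I : ℕ) = i - 1) (hJv : (J : ℕ) = j - 1)
    (hwiC : ((w I : Fin n) : ℕ) = 0)
    (hwjC : ((w J : Fin n) : ℕ) = n - 1)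
    (hdec : ∀ p q : Fin n, p ≠ I → p ≠ J →
      q ≠ I → q ≠ J → p < q → w q < w p)
    (w0 : Equiv.Perm (Fin n)) (hw0 : ∀ k : Fin n, ((w0 k : Fin n) : ℕ) = n - 1 - (k : ℕ)) :
    w = w0 * ascProd n a * descProd n i := by
  have han' : a < n := by omega
  set v : Equiv.Perm (Fin n) := w0 * ascProd n a * descProd n i with hv
  have hval : ∀ x : Fin n, ((v x : Fin n) : ℕ) =
      n - 1 - (if ((descProd n i x : Fin n) : ℕ) < a then ((descProd n i x : Fin n) : ℕ) + 1
        else if ((descProd n i x : Fin n) : ℕ) = a then 0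
        else ((descProd n i x : Fin n) : ℕ)) := by
    intro x
    rw [hv, Equiv.Perm.mul_apply, Equiv.Perm.mul_apply, hw0,
      ascProd_coe n a han' (descProd n i x)]
  have hvI : ((v I : Fin n) : ℕ) = 0 := by
    rw [hval I]
    have hd := descProd_coe' n i hi1 hin I
    rw [hIv] at hd
    split_ifs at hd ⊢ <;> omega
  have hvJ : ((v J : Fin n) : ℕ) = n - 1 := by
    rw [hval J]
    have hd := descProd_coe' n i hi1 hin J
    rw [hJv] at hd
    split_ifs at hd hDJ ⊢ <;> omega
  have hvdec : ∀ p q : Fin n, p ≠ I → p ≠ J → q ≠ I → q ≠ J → p < q → v q < v p := by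
    intro p q hpI hpJ hqI hqJ hpq
    have hpI' : (p : ℕ) ≠ i - 1 := fun h => hpI (Fin.ext (by omega))
    have hpJ' : (p : ℕ) ≠ j - 1 := fun h => hpJ (Fin.ext (by omega))
    have hqI' : (q : ℕ) ≠ i - 1 := fun h => hqI (Fin.ext (by omega))
    have hqJ' : (q : ℕ) ≠ j - 1 := fun h => hqJ (Fin.ext (by omega))
    rw [Fin.lt_def] at hpq ⊢
    rw [hval p, hval q]
    have hdp := descProd_coe' n i hi1 hin p
    have hdq := descProd_coe' n i hi1 hin q
    have hxp := p.isLt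
    have hxq := q.isLt
    set dp : ℕ := ((descProd n i p : Fin n) : ℕ) with hdp0
    set dq : ℕ := ((descProd n i q : Fin n) : ℕ) with hdq0
    have h1 : dp < dq := by split_ifs at hdp hdq <;> omega
    have h2 : dp ≠ a := by split_ifs at hdp hDJ <;> omega
    have h3 : dq ≠ a := by split_ifs at hdq hDJ <;> omega
    have h4 : dq ≤ n - 1 := by split_ifs at hdq <;> omega
    clear hdp hdq hDJ hdp0 hdq0
    split_ifs <;> omega
  have hkw := keyCount hn w I J hwiC hwjC hdec
  have hkv := keyCount hn v I J hvI hvJ hvdec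
  apply Equiv.ext
  intro x
  rcases eq_or_ne x I with h | hxI
  · subst h; exact Fin.ext (by rw [hwiC, hvI])
  · rcases eq_or_ne x J with h | hxJ
    · subst h; exact Fin.ext (by rw [hwjC, hvJ])
    · exact Fin.ext (by rw [hkw x hxI hxJ, hkv x hxI hxJ])


/-- with `w` the permutation with `w(i)=1`, `w(j)=n` and remaining
values `n−1,…,2` in decreasing order, and `w₀` the longest permutation
(`w₀(k) = n−k+1`, 0-based: `(w₀ k : ℕ) = n − 1 − k`):
`w = w₀·s_1⋯s_{j−1}·s_{n−1}⋯s_i` if `j < i`, and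
`w = w₀·s_1⋯s_{j−2}·s_{n−1}⋯s_i` if `j > i`. -/
theorem stmt8 (n : ℕ) (hn : 2 ≤ n) (i j : ℕ) (hi1 : 1 ≤ i) (hin : i ≤ n)
    (hj1 : 1 ≤ j) (hjn : j ≤ n) (hij : i ≠ j) (w : Equiv.Perm (Fin n))
    (hwi : w ⟨i - 1, by omega⟩ = ⟨0, by omega⟩)
    (hwj : w ⟨j - 1, by omega⟩ = ⟨n - 1, by omega⟩)
    (hdec : ∀ p q : Fin n, p ≠ ⟨i - 1, by omega⟩ → p ≠ ⟨j - 1, by omega⟩ →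
      q ≠ ⟨i - 1, by omega⟩ → q ≠ ⟨j - 1, by omega⟩ → p < q → w q < w p)
    (w0 : Equiv.Perm (Fin n)) (hw0 : ∀ k : Fin n, ((w0 k : Fin n) : ℕ) = n - 1 - (k : ℕ)) :
    (j < i → w = w0 * ascProd n (j - 1) * descProd n i) ∧
    (i < j → w = w0 * ascProd n (j - 2) * descProd n i) := by
  constructor
  · intro hji
    exact case_aux n hn i j (j - 1) hi1 hin hj1 hjn hij (by omega)
      (by split_ifs <;> omega) w ⟨i - 1, by omega⟩ ⟨j - 1, by omega⟩ rfl rfl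
      (by rw [hwi]) (by rw [hwj]) hdec w0 hw0
  · intro hij'
    exact case_aux n hn i j (j - 2) hi1 hin hj1 hjn hij (by omega)
      (by split_ifs <;> omega) w ⟨i - 1, by omega⟩ ⟨j - 1, by omega⟩ rfl rfl
      (by rw [hwi]) (by rw [hwj]) hdec w0 hw0
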